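/- There are no integers d ≥ 2, N ≥ 2, k ≥ 1 satisfying 2·d^N = 3^k + 1. -/

import Mathlib

open Zsqrtd

private lemma binom_aux {R : Type*} [CommRing R] (x y : R) (n : ℕ) :
    ∃ c : R, (x + y) ^ (n + 1) = x ^ (n + 1) + (n + 1 : ℕ) * x ^ n * y + y ^ 2 * c := by
  induction n with
  | zero => exact ⟨0, by ring⟩
  | succ n ih =>
    obtain ⟨c, hc⟩ := ih
    refine ⟨x * c + (n + 1 : ℕ) * x ^ n + y * c, ?_⟩
    have h : (x + y) ^ (n + 1 + 1) = (x + y) * (x + y) ^ (n + 1) := by ring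
    rw [h, hc]
    push_cast
    ring

private lemma unit_pow_four (u : GaussianInt) (hu : IsUnit u) : u ^ 4 = 1 := by
  have h1 : u.norm = 1 := (Zsqrtd.norm_eq_one_iff' (by norm_num) u).mpr hu
  obtain ⟨a, b⟩ := u
  simp [Zsqrtd.norm] at h1
  have h2 : a * a + b * b = 1 := by linarith
  have ha : -1 ≤ a ∧ a ≤ 1 := by constructor <;> nlinarith
  have hb : -1 ≤ b ∧ b ≤ 1 := by constructor <;> nlinarith
  obtain ⟨ha1, ha2⟩ := ha; obtain ⟨hb1, hb2⟩ := hb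
  interval_cases a <;> interval_cases b <;>
    first
      | omega
      | (ext <;> simp [pow_succ, Zsqrtd.re_mul, Zsqrtd.im_mul])
      | (exfalso; omega)


private lemma d_odd {d n k : ℕ} (hn : 2 ≤ n) (h : 2 * d ^ n = 3 ^ k + 1) : d % 2 = 1 := by
  by_contra h2
  have hd2 : 2 ∣ d := by omega
  obtain ⟨t, rfl⟩ := hd2
  have h4 : 4 ∣ (2 * t) ^ n := by
    have hn' : n = 2 + (n - 2) := by omega
    rw [hn', pow_add]
    exact Dvd.dvd.mul_right ⟨t * t, by ring⟩ _
  have hk := Nat.div_add_mod k 2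
  have h9 : (3 ^ 2) ^ (k / 2) % 8 = 1 := by rw [Nat.pow_mod]; norm_num
  have h3k : 3 ^ k % 8 = 3 ^ (k % 2) % 8 := by
    conv_lhs => rw [← hk, pow_add, pow_mul]
    rw [Nat.mul_mod, h9, one_mul, Nat.mod_mod]
  have hk2 : k % 2 = 0 ∨ k % 2 = 1 := by omega
  rcases hk2 with hh | hh <;> rw [hh] at h3k <;> norm_num at h3k <;> omega

private lemma k_even {d n k : ℕ} (hd : d % 2 = 1) (h : 2 * d ^ n = 3 ^ k + 1) : k % 2 = 0 := by
  have hdn : d ^ n % 2 = 1 := by rw [Nat.pow_mod, hd]; simp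
  have hk := Nat.div_add_mod k 2
  have h9 : (3 ^ 2) ^ (k / 2) % 4 = 1 := by rw [Nat.pow_mod]; norm_num
  have h3k : 3 ^ k % 4 = 3 ^ (k % 2) % 4 := by
    conv_lhs => rw [← hk, pow_add, pow_mul]
    rw [Nat.mul_mod, h9, one_mul, Nat.mod_mod]
  have hk2 : k % 2 = 0 ∨ k % 2 = 1 := by omega
  rcases hk2 with hh | hh
  · exact hh
  · exfalso; rw [hh] at h3k; norm_num at h3k; omega

private lemma case_sq {e k : ℕ} (hk : 1 ≤ k) (h : 2 * e ^ 2 = 3 ^ k + 1) : False := by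
  have h3 : 3 ∣ 3 ^ k := dvd_pow_self 3 (by omega)
  have he : e ^ 2 % 3 = (e % 3) ^ 2 % 3 := by rw [Nat.pow_mod]
  have h3' : e % 3 = 0 ∨ e % 3 = 1 ∨ e % 3 = 2 := by omega
  obtain ⟨t, ht⟩ := h3
  rcases h3' with hh | hh | hh <;> rw [hh] at he <;> norm_num at he <;> omega

private lemma case_cube {e k : ℕ} (hk2 : 2 ≤ k) (hke : k % 2 = 0) (h : 2 * e ^ 3 = 3 ^ k + 1) :
    False := by
  have h9 : 9 ∣ 3 ^ k := by
    have : 3 ^ k = 9 * 3 ^ (k - 2) := by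
      rw [show (9 : ℕ) = 3 ^ 2 by norm_num, ← pow_add]
      congr 1; omega
    exact ⟨3 ^ (k - 2), this⟩
  have he : e ^ 3 % 9 = (e % 9) ^ 3 % 9 := by rw [Nat.pow_mod]
  have h9' : e % 9 < 9 := Nat.mod_lt _ (by norm_num)
  obtain ⟨t, ht⟩ := h9
  set x := e % 9 with hx
  interval_cases x <;> norm_num at he <;> omega

private lemma main_case (p j r m d : ℕ) (hp : Nat.Prime p) (h5 : 5 ≤ p) (hpj : p = 2 * j + 1)
    (X Y σ : ℤ) (hY : Y = 1 ∨ Y = -1) (hXr : X.natAbs = 3 ^ r) (hσ : σ = 1 ∨ σ = -1)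
    (hXY : X * X + Y * Y = 2 * (d : ℤ)) (hd : 2 ≤ d) (hdp : 2 * d ^ p = 3 ^ (2 * m) + 1)
    (hre : (((⟨X, Y⟩ : GaussianInt)) ^ p).re = σ * (2 ^ j * 3 ^ m)) : False := by
  have hY2 : Y * Y = 1 := by rcases hY with h | h <;> subst h <;> norm_num
  have hXX : X * X = (3 : ℤ) ^ (2 * r) := by
    have h1 : (X.natAbs : ℤ) * (X.natAbs : ℤ) = X * X := Int.natAbs_mul_self
    rw [← h1, hXr]
    push_cast
    rw [two_mul, pow_add]
  have h2d : (2 : ℤ) * d = 3 ^ (2 * r) + 1 := by linarith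
  have h2dn : 2 * d = 3 ^ (2 * r) + 1 := by exact_mod_cast h2d
  have hr1 : 1 ≤ r := by
    by_contra hc
    have : r = 0 := by omega
    subst this
    norm_num at h2dn
    omega
  have h3r : 9 ≤ 3 ^ (2 * r) := by
    calc (9 : ℕ) = 3 ^ 2 := by norm_num
    _ ≤ 3 ^ (2 * r) := Nat.pow_le_pow_right (by norm_num) (by omega)
  have hd5 : 5 ≤ d := by omega
  -- size : 2r < m
  have hsize : 2 * r ≤ m := by
    have h1 : d ^ 5 ≤ d ^ p := Nat.pow_le_pow_right (by omega) h5
    have e2 : 125 * d ^ 2 ≤ d ^ 5 := by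
      calc 125 * d ^ 2 = 5 ^ 3 * d ^ 2 := by norm_num
      _ ≤ d ^ 3 * d ^ 2 := Nat.mul_le_mul_right _ (Nat.pow_le_pow_left hd5 3)
      _ = d ^ 5 := by ring
    have e3 : 3 ^ (2 * r) * 3 ^ (2 * r) < 3 ^ (2 * m) := by
      have c2 : (2 : ℤ) * (d : ℤ) ^ p = 3 ^ (2 * m) + 1 := by exact_mod_cast hdp
      have c3 : (d : ℤ) ^ 5 ≤ (d : ℤ) ^ p := by exact_mod_cast h1
      have c4 : (125 : ℤ) * (d : ℤ) ^ 2 ≤ (d : ℤ) ^ 5 := by exact_mod_cast e2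
      have c5 : (5 : ℤ) ≤ (d : ℤ) := by exact_mod_cast hd5
      have goal : (3 : ℤ) ^ (2 * r) * 3 ^ (2 * r) < 3 ^ (2 * m) := by nlinarith [sq_nonneg ((d : ℤ))]
      exact_mod_cast goal
    rw [← pow_add] at e3
    have := (Nat.pow_lt_pow_iff_right (a := 3) (by norm_num)).mp e3
    omega
  -- binomial expansion
  obtain ⟨cc, hcc⟩ := binom_aux (⟨0, Y⟩ : GaussianInt) ((X : ℤ) : GaussianInt) (2 * j)
  have hxy : (⟨0, Y⟩ : GaussianInt) + ((X : ℤ) : GaussianInt) = ⟨X, Y⟩ := by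
    ext <;> simp
  have hx2 : (⟨0, Y⟩ : GaussianInt) ^ 2 = -1 := by
    ext <;> simp [pow_two, Zsqrtd.re_mul, Zsqrtd.im_mul, hY2]
  have hx2j : (⟨0, Y⟩ : GaussianInt) ^ (2 * j) = (((-1 : ℤ) ^ j : ℤ) : GaussianInt) := by
    rw [pow_mul, hx2]
    push_cast
    ring
  obtain ⟨ε, hε, hx2j'⟩ : ∃ ε : ℤ, (ε = 1 ∨ ε = -1) ∧
      (⟨0, Y⟩ : GaussianInt) ^ (2 * j) = ((ε : ℤ) : GaussianInt) :=
    ⟨(-1) ^ j, neg_one_pow_eq_or ℤ j, hx2j⟩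
  have hx2j1 : (⟨0, Y⟩ : GaussianInt) ^ (2 * j + 1) = ⟨0, ε * Y⟩ := by
    rw [pow_succ, hx2j']
    rcases hε with h | h <;> subst h <;> ext <;>
      simp [Zsqrtd.re_mul, Zsqrtd.im_mul, Zsqrtd.re_intCast, Zsqrtd.im_intCast]
  have hy2 : (((X : ℤ) : GaussianInt)) ^ 2 = (((3 : ℤ) ^ (2 * r) : ℤ) : GaussianInt) := by
    rw [← hXX]; push_cast; ring
  rw [hxy, hx2j1, hx2j', hy2, ← hpj] at hcc
  -- take real parts
  have hre2 : ((⟨X, Y⟩ : GaussianInt) ^ p).re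
      = (p : ℤ) * (ε * X) + 3 ^ (2 * r) * cc.re := by
    rw [hcc]
    simp only [Zsqrtd.re_add, Zsqrtd.re_mul, Zsqrtd.im_mul, Zsqrtd.re_intCast, Zsqrtd.im_intCast,
      Zsqrtd.re_natCast, Zsqrtd.im_natCast]
    ring
  have heq : (p : ℤ) * (ε * X) = σ * (2 ^ j * 3 ^ m) - 3 ^ (2 * r) * cc.re := by
    rw [hre2] at hre; linarith
  have hdvd3 : (3 : ℤ) ^ (2 * r) ∣ (p : ℤ) * (ε * X) := by
    rw [heq]
    apply dvd_sub
    · exact Dvd.dvd.mul_left (Dvd.dvd.mul_left (pow_dvd_pow 3 hsize) _) _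
    · exact Dvd.dvd.mul_right (dvd_refl _) _
  have hdvdn : (3 : ℕ) ^ (2 * r) ∣ p * 3 ^ r := by
    have h1 := Int.natAbs_dvd_natAbs.mpr hdvd3
    rcases hε with h | h <;> subst h <;>
      simpa [Int.natAbs_mul, Int.natAbs_pow, hXr] using h1
  have h3p : (3 : ℕ) ^ r ∣ p := by
    rw [two_mul, pow_add] at hdvdn
    have h2 : 3 ^ r * 3 ^ r ∣ 3 ^ r * p := by rwa [mul_comm p _] at hdvdn
    exact (Nat.mul_dvd_mul_iff_left (pow_pos (by norm_num) r)).mp h2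
  have h3p' : 3 ∣ p := dvd_trans (dvd_pow_self 3 (by omega)) h3p
  rcases (Nat.Prime.eq_one_or_self_of_dvd hp 3 h3p') with h | h <;> omega

private lemma odd_dvd_two_pow {x : ℤ} {j : ℕ} (hodd : x % 2 = 1) (h : x ∣ 2 ^ j) :
    x = 1 ∨ x = -1 := by
  have h1 : x.natAbs ∣ 2 ^ j := by
    have := Int.natAbs_dvd_natAbs.mpr h
    simpa [Int.natAbs_pow] using this
  obtain ⟨i, hi, he⟩ := (Nat.dvd_prime_pow Nat.prime_two).mp h1
  have hxodd : x.natAbs % 2 = 1 := by omega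
  have hi0 : i = 0 := by
    by_contra hi0
    have h2 : 2 ∣ x.natAbs := he ▸ dvd_pow_self 2 hi0
    omega
  subst hi0
  simp at he
  rcases Int.natAbs_eq x with hh | hh <;> rw [he] at hh <;> [left; right] <;> exact_mod_cast hh

private lemma odd_dvd_two_three {x : ℤ} {j m : ℕ} (hodd : x % 2 = 1) (h : x ∣ 2 ^ j * 3 ^ m) :
    ∃ r : ℕ, x.natAbs = 3 ^ r := by
  have h1 : x.natAbs ∣ 2 ^ j * 3 ^ m := by
    have := Int.natAbs_dvd_natAbs.mpr h
    simpa [Int.natAbs_mul, Int.natAbs_pow] using this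
  have hco : Nat.Coprime x.natAbs (2 ^ j) := by
    apply Nat.Coprime.pow_right
    apply Nat.Coprime.symm
    apply (Nat.prime_two.coprime_iff_not_dvd).mpr
    have : x.natAbs % 2 = 1 := by omega
    omega
  have h2 : x.natAbs ∣ 3 ^ m := (Nat.Coprime.dvd_of_dvd_mul_left hco h1)
  obtain ⟨r, _, hr⟩ := (Nat.dvd_prime_pow Nat.prime_three).mp h2
  exact ⟨r, hr⟩

private lemma key (p : ℕ) (hp : Nat.Prime p) (h5 : 5 ≤ p) (d m : ℕ) (hd : 2 ≤ d)
    (h : 2 * d ^ p = 3 ^ (2 * m) + 1) : False := by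
  obtain ⟨j, hpj⟩ : ∃ j, p = 2 * j + 1 := by
    have hodd : p % 2 = 1 := by
      rcases hp.eq_two_or_odd with h2 | h2
      · omega
      · exact h2
    exact ⟨p / 2, by omega⟩
  obtain ⟨ε, hεpm, hεdef⟩ : ∃ ε : ℤ, (ε = 1 ∨ ε = -1) ∧ (-1 : ℤ) ^ j = ε :=
    ⟨(-1) ^ j, neg_one_pow_eq_or ℤ j, rfl⟩
  have hdodd : d % 2 = 1 := d_odd (by omega) h
  have hZ : 2 * (d : ℤ) ^ p = 3 ^ (2 * m) + 1 := by exact_mod_cast h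
  -- the half of 3^m+1
  have h3odd : (3 : ℕ) ^ m % 2 = 1 := by rw [Nat.pow_mod]; norm_num
  set s : ℤ := (3 : ℤ) ^ m with hs
  obtain ⟨cn, hcn⟩ : ∃ cn : ℕ, 2 * cn = 3 ^ m + 1 := ⟨(3 ^ m + 1) / 2, by omega⟩
  set c : ℤ := (cn : ℤ) with hcdef
  have hc : 2 * c = s + 1 := by rw [hcdef, hs]; exact_mod_cast hcn
  have hs2 : s ^ 2 = 3 ^ (2 * m) := by rw [hs, ← pow_mul, mul_comm]
  set z : GaussianInt := ⟨c, 1 - c⟩ with hzdef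
  have hz1 : (⟨1, 1⟩ : GaussianInt) * z = ⟨s, 1⟩ := by
    ext <;> simp [hzdef, Zsqrtd.re_mul, Zsqrtd.im_mul] <;> linarith
  have hnorm : z.norm = (d : ℤ) ^ p := by
    have h4 : 4 * (c * c + (1 - c) * (1 - c)) = 4 * (d : ℤ) ^ p := by
      have hss : s ^ 2 + 1 = 2 * (d : ℤ) ^ p := by rw [hs2]; linarith
      linear_combination (4 * c + 2 * s - 2) * hc + 2 * hss
    simp only [Zsqrtd.norm, hzdef]
    ring_nf
    ring_nf at h4
    linarith
  have hzz : z * star z = ((d : ℤ) : GaussianInt) ^ p := by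
    have h1 := Zsqrtd.norm_eq_mul_conj z
    rw [hnorm] at h1
    rw [← h1]
    push_cast
    ring
  -- coprimality
  have hdpodd : ¬ (2 : ℤ) ∣ (d : ℤ) ^ p := by
    intro hdvd
    have : (2 : ℤ) ∣ (d : ℤ) := Prime.dvd_of_dvd_pow Int.prime_two hdvd
    omega
  have hco2 : IsCoprime (2 : ℤ) ((d : ℤ) ^ p) := (Int.prime_two.coprime_iff_not_dvd).mpr hdpodd
  obtain ⟨a0, b0, hab⟩ := hco2
  have key2 : (⟨1, -1⟩ : GaussianInt) * z + ⟨1, 1⟩ * star z = 2 := by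
    ext <;> simp [hzdef, Zsqrtd.re_mul, Zsqrtd.im_mul] <;> ring
  have habC : (a0 : GaussianInt) * 2 + (b0 : GaussianInt) * ((d : ℤ) : GaussianInt) ^ p = 1 := by
    have := congrArg (fun t : ℤ => ((t : ℤ) : GaussianInt)) hab
    push_cast at this ⊢
    convert this using 1 <;> push_cast <;> ring
  have hcz : IsCoprime z (star z) := by
    refine ⟨(a0 : GaussianInt) * ⟨1, -1⟩, (a0 : GaussianInt) * ⟨1, 1⟩ + (b0 : GaussianInt) * z, ?_⟩
    linear_combination (a0 : GaussianInt) * key2 + (b0 : GaussianInt) * hzz + habC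
  obtain ⟨w, hw⟩ := exists_associated_pow_of_mul_eq_pow' hcz hzz
  obtain ⟨u, hu⟩ := hw
  have hu4 : (u : GaussianInt) ^ 4 = 1 := unit_pow_four _ u.isUnit
  set W : GaussianInt := w * (u : GaussianInt) ^ p with hWdef
  have hW : W ^ p = z := by
    have hpp : p * p = 4 * (j * j + j) + 1 := by subst hpj; ring
    rw [hWdef, mul_pow, ← pow_mul, hpp, pow_add, pow_mul, hu4, one_pow, pow_one, ← hu]
    ring
  -- norm of W
  have hnW : W.norm = (d : ℤ) := by
    have h1 : (W ^ p).norm = W.norm ^ p := map_pow (Zsqrtd.normMonoidHom (d := -1)) W p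
    have h2 : W.norm ^ p = (d : ℤ) ^ p := by rw [← h1, hW, hnorm]
    have h3 : W.norm.natAbs ^ p = d ^ p := by
      have := congrArg Int.natAbs h2
      simpa [Int.natAbs_pow] using this
    have h4 : W.norm.natAbs = d := Nat.pow_left_injective (by omega) h3
    have h5 := Int.natAbs_of_nonneg (Zsqrtd.norm_nonneg (by norm_num) W)
    rw [← h5, h4]

  -- components of W
  set U : ℤ := W.re - W.im with hUdef
  set V : ℤ := W.re + W.im with hVdef
  have habd : W.re * W.re + W.im * W.im = (d : ℤ) := by
    have h1 := hnW
    simp only [Zsqrtd.norm] at h1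
    linarith
  have hpar : W.re % 2 + W.im % 2 = 1 := by
    have haa : W.re * W.re % 2 = W.re % 2 * (W.re % 2) % 2 := Int.mul_emod _ _ 2
    have hbb : W.im * W.im % 2 = W.im % 2 * (W.im % 2) % 2 := Int.mul_emod _ _ 2
    have hsum : (W.re * W.re + W.im * W.im) % 2 = 1 := by rw [habd]; omega
    have h2 : (W.re * W.re % 2 + W.im * W.im % 2) % 2 = 1 := by rw [← Int.add_emod]; exact hsum
    rcases Int.emod_two_eq W.re with hh | hh <;> rcases Int.emod_two_eq W.im with hh' | hh' <;>
      simp only [hh, hh'] at haa hbb <;> norm_num at haa hbb <;> omega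
  have hUodd : U % 2 = 1 := by omega
  have hVodd : V % 2 = 1 := by omega
  have hUV : U * U + V * V = 2 * (d : ℤ) := by
    rw [hUdef, hVdef]; linear_combination 2 * habd
  -- A = (1+i) W
  set A : GaussianInt := ⟨U, V⟩ with hAdef
  have hA : (⟨1, 1⟩ : GaussianInt) * W = A := by
    ext <;> simp [hAdef, Zsqrtd.re_mul, Zsqrtd.im_mul] <;> omega
  have I2 : (⟨0, 1⟩ : GaussianInt) ^ 2 = -1 := by
    ext <;> simp [pow_two, Zsqrtd.re_mul, Zsqrtd.im_mul]
  have I4 : (⟨0, 1⟩ : GaussianInt) ^ 4 = 1 := by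
    have : (4 : ℕ) = 2 * 2 := by norm_num
    rw [this, pow_mul, I2]; norm_num
  have h2sq : (⟨1, 1⟩ : GaussianInt) ^ 2 = ⟨0, 2⟩ := by
    ext <;> simp [pow_two, Zsqrtd.re_mul, Zsqrtd.im_mul]
  have hI02 : (⟨0, 2⟩ : GaussianInt) = ((2 : ℤ) : GaussianInt) * ⟨0, 1⟩ := by
    ext <;> simp
  have hj4 := Nat.div_add_mod j 4
  have Ij : (⟨0, 1⟩ : GaussianInt) ^ j = (⟨0, 1⟩ : GaussianInt) ^ (j % 4) := by
    conv_lhs => rw [← hj4]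
    rw [pow_add, pow_mul, I4, one_pow, one_mul]
  have hAp2 : A ^ p = ((2 ^ j : ℤ) : GaussianInt) * ((⟨0, 1⟩ : GaussianInt) ^ (j % 4) * ⟨s, 1⟩) := by
    calc A ^ p = ((⟨1, 1⟩ : GaussianInt) * W) ^ p := by rw [hA]
    _ = (⟨1, 1⟩ : GaussianInt) ^ p * z := by rw [mul_pow, hW]
    _ = ((⟨1, 1⟩ : GaussianInt) ^ 2) ^ j * ((⟨1, 1⟩ : GaussianInt) * z) := by
          rw [hpj, pow_succ, pow_mul]; ring
    _ = (((2 : ℤ) : GaussianInt) * ⟨0, 1⟩) ^ j * ⟨s, 1⟩ := by rw [h2sq, hI02, hz1]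
    _ = ((2 ^ j : ℤ) : GaussianInt) * ((⟨0, 1⟩ : GaussianInt) ^ j * ⟨s, 1⟩) := by
          rw [mul_pow]; push_cast; ring
    _ = ((2 ^ j : ℤ) : GaussianInt) * ((⟨0, 1⟩ : GaussianInt) ^ (j % 4) * ⟨s, 1⟩) := by rw [Ij]
  -- divisibility of components
  have hUd : (U : GaussianInt) ∣ A - ⟨0, V⟩ := by
    have he : A - ⟨0, V⟩ = (U : GaussianInt) := by
      ext <;> simp [hAdef]
    rw [he]
  have hIp : (⟨0, 1⟩ : GaussianInt) ^ p = ((ε : ℤ) : GaussianInt) * ⟨0, 1⟩ := by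
    rw [hpj, pow_succ, pow_mul, I2, ← hεdef]
    push_cast
    ring
  have hVI : (⟨0, V⟩ : GaussianInt) = ((V : ℤ) : GaussianInt) * ⟨0, 1⟩ := by
    ext <;> simp
  have hXp : (⟨0, V⟩ : GaussianInt) ^ p = ⟨0, ε * V ^ p⟩ := by
    rw [hVI, mul_pow, hIp]
    have h2 : ((V : ℤ) : GaussianInt) ^ p = ((V ^ p : ℤ) : GaussianInt) := by push_cast; ring
    rw [h2]
    ext <;> simp only [Zsqrtd.re_mul, Zsqrtd.im_mul, Zsqrtd.re_intCast, Zsqrtd.im_intCast] <;>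
      ring
  have hUre : U ∣ (A ^ p).re := by
    have hdiff : (U : GaussianInt) ∣ A ^ p - ⟨0, ε * V ^ p⟩ := by
      rw [← hXp]
      exact dvd_trans hUd (sub_dvd_pow_sub_pow A _ p)
    have h1 := ((Zsqrtd.intCast_dvd U _).mp hdiff).1
    simpa using h1
  have hVim : V ∣ (A ^ p).im := by
    have hVd : (V : GaussianInt) ∣ A - (U : GaussianInt) := by
      have he : A - (U : GaussianInt) = ((V : ℤ) : GaussianInt) * ⟨0, 1⟩ := by
        ext <;> simp [hAdef]
      rw [he]
      exact dvd_mul_right _ _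
    have hdiff : (V : GaussianInt) ∣ A ^ p - ((U ^ p : ℤ) : GaussianInt) := by
      have h1 := sub_dvd_pow_sub_pow A ((U : ℤ) : GaussianInt) p
      have h2 : ((U : ℤ) : GaussianInt) ^ p = ((U ^ p : ℤ) : GaussianInt) := by push_cast; ring
      rw [h2] at h1
      exact dvd_trans hVd h1
    have h1 := ((Zsqrtd.intCast_dvd V _).mp hdiff).2
    rw [Zsqrtd.im_sub, Zsqrtd.im_intCast, sub_zero] at h1
    exact h1
  -- swapped component lemma
  have hBpre : ((⟨V, U⟩ : GaussianInt) ^ p).re = ε * (A ^ p).im := by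
    have hBA : (⟨V, U⟩ : GaussianInt) = ⟨0, 1⟩ * star A := by
      ext <;> simp [hAdef, Zsqrtd.re_mul, Zsqrtd.im_mul]
    rw [hBA, mul_pow, hIp, ← star_pow]
    simp only [Zsqrtd.re_mul, Zsqrtd.im_mul, Zsqrtd.re_intCast, Zsqrtd.im_intCast,
      Zsqrtd.re_star, Zsqrtd.im_star]
    ring
  have hUVd : V * V + U * U = 2 * (d : ℤ) := by linarith
  -- case split on j % 4
  have hj4' : j % 4 = 0 ∨ j % 4 = 1 ∨ j % 4 = 2 ∨ j % 4 = 3 := by omega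
  rcases hj4' with hv | hv | hv | hv <;> rw [hv] at hAp2
  · -- A^p = ⟨2^j * 3^m, 2^j⟩
    have hval : A ^ p = ⟨2 ^ j * s, 2 ^ j * 1⟩ := by
      rw [hAp2, pow_zero, one_mul, Zsqrtd.smul_val]
    have hRe : (A ^ p).re = 2 ^ j * 3 ^ m := by rw [hval]
    have hIm : (A ^ p).im = 2 ^ j := by rw [hval]; ring
    have hV1 : V = 1 ∨ V = -1 := odd_dvd_two_pow hVodd (hIm ▸ hVim)
    obtain ⟨r, hr⟩ := odd_dvd_two_three hUodd (hRe ▸ hUre)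
    exact main_case p j r m d hp h5 hpj U V 1 hV1 hr (Or.inl rfl) hUV hd h
      (by rw [← hAdef, hRe]; ring)
  · -- A^p = cast * (I * ⟨s,1⟩) = ⟨-2^j, 2^j * s⟩
    have hval : A ^ p = ⟨2 ^ j * (-1), 2 ^ j * s⟩ := by
      rw [hAp2, pow_one]
      have hIs : (⟨0, 1⟩ : GaussianInt) * ⟨s, 1⟩ = ⟨-1, s⟩ := by
        ext <;> simp [Zsqrtd.re_mul, Zsqrtd.im_mul]
      rw [hIs, Zsqrtd.smul_val]
    have hRe : (A ^ p).re = -(2 ^ j) := by rw [hval]; ring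
    have hIm : (A ^ p).im = 2 ^ j * 3 ^ m := by rw [hval]
    have hU1 : U = 1 ∨ U = -1 := by
      apply odd_dvd_two_pow hUodd
      have := hRe ▸ hUre
      exact (dvd_neg).mp this
    obtain ⟨r, hr⟩ := odd_dvd_two_three hVodd (hIm ▸ hVim)
    refine main_case p j r m d hp h5 hpj V U ε hU1 hr hεpm hUVd hd h ?_
    rw [hBpre, hIm]
  · -- A^p = cast * (-⟨s,1⟩) = ⟨-2^j s, -2^j⟩
    have hval : A ^ p = ⟨2 ^ j * (-s), 2 ^ j * (-1)⟩ := by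
      rw [hAp2, I2]
      have hIs : (-1 : GaussianInt) * ⟨s, 1⟩ = ⟨-s, -1⟩ := by
        ext <;> simp
      rw [hIs, Zsqrtd.smul_val]
    have hRe : (A ^ p).re = (-1) * (2 ^ j * 3 ^ m) := by rw [hval, hs]; ring
    have hIm : (A ^ p).im = -(2 ^ j) := by rw [hval]; ring
    have hV1 : V = 1 ∨ V = -1 := by
      apply odd_dvd_two_pow hVodd
      have := hIm ▸ hVim
      exact (dvd_neg).mp this
    obtain ⟨r, hr⟩ := odd_dvd_two_three hUodd (by rw [hRe] at hUre; exact (dvd_neg).mp (by simpa using hUre))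
    exact main_case p j r m d hp h5 hpj U V (-1) hV1 hr (Or.inr rfl) hUV hd h
      (by rw [← hAdef, hRe])
  · -- A^p = cast * (I^3 * ⟨s,1⟩) = ⟨2^j, -2^j s⟩
    have hval : A ^ p = ⟨2 ^ j * 1, 2 ^ j * (-s)⟩ := by
      rw [hAp2]
      have hI3 : (⟨0, 1⟩ : GaussianInt) ^ 3 = -⟨0, 1⟩ := by
        have : (3 : ℕ) = 2 + 1 := by norm_num
        rw [this, pow_add, I2, pow_one]
        ring
      have hIs : -(⟨0, 1⟩ : GaussianInt) * ⟨s, 1⟩ = ⟨1, -s⟩ := by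
        ext <;> simp [Zsqrtd.re_mul, Zsqrtd.im_mul]
      rw [hI3, hIs, Zsqrtd.smul_val]
    have hRe : (A ^ p).re = 2 ^ j := by rw [hval]; ring
    have hIm : (A ^ p).im = -(2 ^ j * 3 ^ m) := by rw [hval, hs]; ring
    have hU1 : U = 1 ∨ U = -1 := odd_dvd_two_pow hUodd (hRe ▸ hUre)
    obtain ⟨r, hr⟩ := odd_dvd_two_three hVodd (by rw [hIm] at hVim; exact (dvd_neg).mp (by simpa using hVim))
    refine main_case p j r m d hp h5 hpj V U (-ε) hU1 hr ?_ hUVd hd h ?_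
    · rcases hεpm with hh | hh <;> rw [hh] <;> norm_num
    · rw [hBpre, hIm]; ring

theorem stmt_1 : ¬ ∃ (d N k : ℕ), 2 ≤ d ∧ 2 ≤ N ∧ 1 ≤ k ∧
    2 * d ^ N = 3 ^ k + 1 := by
  rintro ⟨d, N, k, hd, hN, hk, h⟩
  have hdodd : d % 2 = 1 := d_odd hN h
  have hkeven : k % 2 = 0 := k_even hdodd h
  have hNne : N ≠ 1 := by omega
  set p := N.minFac with hpdef
  have hp : p.Prime := Nat.minFac_prime hNne
  obtain ⟨t, hNt⟩ := N.minFac_dvd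
  have ht1 : 1 ≤ t := by
    rcases Nat.eq_zero_or_pos t with h0 | h0
    · subst h0; simp at hNt; omega
    · exact h0
  have he : (d ^ t) ^ p = d ^ N := by rw [← pow_mul, mul_comm, ← hNt]
  have he2 : 2 ≤ d ^ t := le_trans hd (Nat.le_self_pow (by omega) d)
  have h' : 2 * (d ^ t) ^ p = 3 ^ k + 1 := by rw [he]; exact h
  by_cases hp2 : p = 2
  · rw [hp2] at h'
    exact case_sq hk h'
  by_cases hp3 : p = 3
  · rw [hp3] at h'
    exact case_cube (by omega) hkeven h'
  have h5 : 5 ≤ p := by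
    have h2 := hp.two_le
    have : p ≠ 4 := by
      intro h4
      rw [h4] at hp
      norm_num at hp
    omega
  obtain ⟨m, hm⟩ : ∃ m, k = 2 * m := ⟨k / 2, by omega⟩
  rw [hm] at h'
  exact key p hp h5 (d ^ t) m he2 h'
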